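/- Let m₀, A ∈ ℝ³ with ‖m₀‖ = 1, ⟨A, m₀⟩ = 0, and A ≠ 0, let σ ∈ ℝ, set ω := A + σ m₀, and define the curve m(t) := exp(t · skew(ω)) m₀. Then m'(0) = A × m₀ with ‖m'(0)‖ = ‖A‖, m₀ × m'(0) = A, and the geodesic curvature of this circular trajectory at t = 0 satisfies ⟨m''(0), m₀ × m'(0)⟩ / ‖m'(0)‖³ = σ / ‖A‖. -/

import Mathlib

open Matrix
open scoped RealInnerProductSpace

noncomputable section

/-- `skew3 ξ` is the skew-symmetric matrix with `skew3 ξ *ᵥ x = ξ × x`. -/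
def skew3 (ξ : Fin 3 → ℝ) : Matrix (Fin 3) (Fin 3) ℝ :=
  !![0, -ξ 2, ξ 1; ξ 2, 0, -ξ 0; -ξ 1, ξ 0, 0]

/-- The cross product on `ℝ³` (modelled as `EuclideanSpace ℝ (Fin 3)`). -/
def cross (a b : EuclideanSpace ℝ (Fin 3)) : EuclideanSpace ℝ (Fin 3) :=
  WithLp.toLp 2 ![a 1 * b 2 - a 2 * b 1, a 2 * b 0 - a 0 * b 2, a 0 * b 1 - a 1 * b 0]

attribute [local instance] Matrix.linftyOpNormedRing Matrix.linftyOpNormedAlgebra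

/-- `X ↦ X *ᵥ v` as a linear map into `EuclideanSpace`. -/
def mulVecL (v : EuclideanSpace ℝ (Fin 3)) :
    Matrix (Fin 3) (Fin 3) ℝ →ₗ[ℝ] EuclideanSpace ℝ (Fin 3) where
  toFun X := WithLp.toLp 2 (X *ᵥ v)
  map_add' X Y := by simp [Matrix.add_mulVec]
  map_smul' c X := by simp [Matrix.smul_mulVec]

lemma skew3_mulVec (ξ : EuclideanSpace ℝ (Fin 3)) (x : EuclideanSpace ℝ (Fin 3)) :
    skew3 ξ *ᵥ x = (cross ξ x).ofLp := by
  funext i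
  fin_cases i <;>
    simp [skew3, cross, Matrix.mulVec, dotProduct, Fin.sum_univ_three] <;> ring

set_option maxHeartbeats 1000000 in
/-- For the rigid rotation `m (t) = exp (t skew (A + σ m₀)) m₀` of a unit vector `m₀` about
the axis `ω = A + σ m₀` (with `A ⊥ m₀`, `A ≠ 0`), one has `m' (0) = A × m₀`,
`‖m' (0)‖ = ‖A‖`, `m₀ × m' (0) = A`, and the geodesic curvature of the circular trajectory
at `t = 0` is `⟨m'' (0), m₀ × m' (0)⟩ / ‖m' (0)‖³ = σ / ‖A‖`. -/
theorem geodesic_curvature_of_circular_update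
    (m₀ A : EuclideanSpace ℝ (Fin 3)) (hm₀ : ‖m₀‖ = 1) (hA : ⟪A, m₀⟫ = 0) (hA0 : A ≠ 0)
    (σ : ℝ) (ω : EuclideanSpace ℝ (Fin 3)) (hω : ω = A + σ • m₀)
    (m : ℝ → EuclideanSpace ℝ (Fin 3))
    (hm : ∀ t : ℝ,
      m t = (WithLp.toLp 2 (NormedSpace.exp (t • skew3 ω) *ᵥ m₀) : EuclideanSpace ℝ (Fin 3))) :
    deriv m 0 = cross A m₀ ∧
    ‖deriv m 0‖ = ‖A‖ ∧
    cross m₀ (deriv m 0) = A ∧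
    ⟪deriv (deriv m) 0, cross m₀ (deriv m 0)⟫ / ‖deriv m 0‖ ^ 3 = σ / ‖A‖ := by
  set M := skew3 ω with hM
  -- first derivative
  have hm1 : ∀ t : ℝ, HasDerivAt m ((mulVecL m₀) (NormedSpace.exp (t • M) * M)) t := by
    intro t
    have hme : m = fun s : ℝ =>
        (mulVecL m₀).toContinuousLinearMap (NormedSpace.exp (s • M)) := funext fun s => hm s
    rw [hme]
    exact (mulVecL m₀).toContinuousLinearMap.hasFDerivAt.comp_hasDerivAt t
      (hasDerivAt_exp_smul_const M t)
  have hderiv : deriv m = fun t : ℝ => (mulVecL m₀) (NormedSpace.exp (t • M) * M) :=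
    funext fun t => (hm1 t).deriv
  -- second derivative at 0
  have L2 := (mulVecL m₀).comp (LinearMap.mulRight ℝ M)
  have hm2 : HasDerivAt (deriv m)
      (((mulVecL m₀).comp (LinearMap.mulRight ℝ M)) (NormedSpace.exp ((0:ℝ) • M) * M)) 0 := by
    have hde : deriv m = fun s : ℝ =>
        ((mulVecL m₀).comp (LinearMap.mulRight ℝ M)).toContinuousLinearMap
          (NormedSpace.exp (s • M)) := by
      rw [hderiv]; rfl
    rw [hde]
    exact ((mulVecL m₀).comp (LinearMap.mulRight ℝ M)).toContinuousLinearMap.hasFDerivAt.comp_hasDerivAt 0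
      (hasDerivAt_exp_smul_const M 0)
  have hd0 : deriv m 0 = cross ω m₀ := by
    rw [hderiv]
    simp only [zero_smul, NormedSpace.exp_zero, one_mul]
    show WithLp.toLp 2 (M *ᵥ m₀.ofLp) = _
    rw [skew3_mulVec ω m₀]
  have hdd0 : deriv (deriv m) 0 = cross ω (cross ω m₀) := by
    rw [hm2.deriv]
    simp only [zero_smul, NormedSpace.exp_zero, one_mul, LinearMap.comp_apply,
      LinearMap.mulRight_apply]
    show WithLp.toLp 2 ((M * M) *ᵥ m₀.ofLp) = _
    rw [← Matrix.mulVec_mulVec, skew3_mulVec, skew3_mulVec]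
  -- scalar facts
  have hA' : A 0 * m₀ 0 + A 1 * m₀ 1 + A 2 * m₀ 2 = 0 := by
    have h := hA
    simp only [PiLp.inner_apply, RCLike.inner_apply, Fin.sum_univ_three, conj_trivial] at h
    linear_combination h
  have hm₀' : m₀ 0 * m₀ 0 + m₀ 1 * m₀ 1 + m₀ 2 * m₀ 2 = 1 := by
    have h := real_inner_self_eq_norm_sq m₀
    rw [hm₀] at h
    simp only [PiLp.inner_apply, RCLike.inner_apply, Fin.sum_univ_three, conj_trivial] at h
    linear_combination h
  have hωc : ∀ i, ω i = A i + σ * m₀ i := by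
    intro i; rw [hω]; simp [PiLp.add_apply, PiLp.smul_apply]
  -- deriv m 0 = cross A m₀
  have h1 : deriv m 0 = cross A m₀ := by
    rw [hd0]
    ext i
    fin_cases i <;> simp [cross, hωc] <;> ring
  -- norm
  have hnormsq : ‖cross A m₀‖ ^ 2 = ‖A‖ ^ 2 := by
    rw [← real_inner_self_eq_norm_sq, ← real_inner_self_eq_norm_sq]
    simp only [PiLp.inner_apply, RCLike.inner_apply, Fin.sum_univ_three, conj_trivial]
    show cross A m₀ 0 * cross A m₀ 0 + cross A m₀ 1 * cross A m₀ 1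
        + cross A m₀ 2 * cross A m₀ 2 = _
    simp only [cross, Matrix.cons_val_zero, Matrix.cons_val_one, Matrix.head_cons,
      Matrix.cons_val_two, Matrix.tail_cons]
    nlinarith [hA', hm₀', sq_nonneg (A 0 * m₀ 0 + A 1 * m₀ 1 + A 2 * m₀ 2)]
  have h2 : ‖cross A m₀‖ = ‖A‖ := by
    rw [← Real.sqrt_sq (norm_nonneg (cross A m₀)), hnormsq, Real.sqrt_sq (norm_nonneg A)]
  -- cross m₀ (cross A m₀) = A
  have h3 : cross m₀ (cross A m₀) = A := by
    ext i
    fin_cases i <;> simp [cross]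
    · linear_combination A 0 * hm₀' - m₀ 0 * hA'
    · linear_combination A 1 * hm₀' - m₀ 1 * hA'
    · linear_combination A 2 * hm₀' - m₀ 2 * hA'
  have hAn : ‖A‖ ≠ 0 := norm_ne_zero_iff.mpr hA0
  refine ⟨h1, h1 ▸ h2, h1 ▸ h3, ?_⟩
  rw [h1, h2, h3, hdd0]
  have hinner : ⟪(cross ω (cross ω m₀) : EuclideanSpace ℝ (Fin 3)), A⟫ = σ * ‖A‖ ^ 2 := by
    rw [← real_inner_self_eq_norm_sq]
    simp only [PiLp.inner_apply, RCLike.inner_apply, Fin.sum_univ_three, conj_trivial]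
    show A 0 * cross ω (cross ω m₀) 0 + A 1 * cross ω (cross ω m₀) 1
        + A 2 * cross ω (cross ω m₀) 2 = _
    simp only [cross, Matrix.cons_val_zero, Matrix.cons_val_one, Matrix.head_cons,
      Matrix.cons_val_two, Matrix.tail_cons, hωc]
    linear_combination σ * (A 0 * A 0 + A 1 * A 1 + A 2 * A 2) * hm₀' -
      σ * (A 0 * m₀ 0 + A 1 * m₀ 1 + A 2 * m₀ 2) * hA'
  rw [hinner]
  field_simp
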